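/- For any valid assignment x, k·V_k(x) + z(x) = C, where z(x) = Σ_{j=1}^k (k-j+1)·Q_j(x) and C = Σ_{i=1}^n (1/2)(1 + 1/k_i)·k·s_i + ((1+k)k/2)·D is a constant independent of x. -/

import Mathlib

lemma tau_le_of_mod (m τ j : ℕ) (hm : 0 < m) (hτ2 : τ ≤ m) (hj1 : 1 ≤ j)
    (hdvd : (m : ℤ) ∣ (j : ℤ) - (τ : ℤ)) : τ ≤ j := by
  by_contra h
  push_neg at h
  have h0 : (j : ℤ) - τ = 0 := by
    refine Int.eq_zero_of_abs_lt_dvd hdvd ?_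
    rw [abs_lt]
    omega
  omega

lemma sum_indicator_eq (k m τ q : ℕ) (hm : 0 < m) (hkq : k = m * q)
    (hτ1 : 1 ≤ τ) (hτ2 : τ ≤ m) (g : ℕ → ℝ) :
    ∑ j ∈ Finset.Icc 1 k, (if ((j : ℤ) - (τ : ℤ)) % (m : ℤ) = 0 then g j else 0)
      = ∑ t ∈ Finset.range q, g (τ + t * m) := by
  rw [← Finset.sum_filter]
  refine Finset.sum_nbij' (fun j => (j - τ) / m) (fun t => τ + t * m) ?_ ?_ ?_ ?_ ?_
  · intro j hj
    simp only [Finset.mem_filter, Finset.mem_Icc] at hj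
    obtain ⟨⟨hj1, hjk⟩, hmod⟩ := hj
    have hdvd : (m : ℤ) ∣ (j : ℤ) - τ := Int.dvd_of_emod_eq_zero hmod
    have hjτ : τ ≤ j := tau_le_of_mod m τ j hm hτ2 hj1 hdvd
    have hdvd' : m ∣ j - τ := by
      have : (m : ℤ) ∣ ((j - τ : ℕ) : ℤ) := by rwa [Nat.cast_sub hjτ]
      exact_mod_cast this
    obtain ⟨c, hc⟩ := hdvd'
    have hcd : (j - τ) / m = c := by rw [hc]; exact Nat.mul_div_cancel_left c hm
    simp only [Finset.mem_range, hcd]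
    have h5 : m * c < m * q := by omega
    exact Nat.lt_of_mul_lt_mul_left h5
  · intro t ht
    simp only [Finset.mem_range] at ht
    simp only [Finset.mem_filter, Finset.mem_Icc]
    refine ⟨⟨by omega, by nlinarith⟩, ?_⟩
    have h1 : ((τ + t * m : ℕ) : ℤ) - τ = m * t := by push_cast; ring
    rw [h1]
    simp [Int.mul_emod_right]
  · intro j hj
    simp only [Finset.mem_filter, Finset.mem_Icc] at hj
    obtain ⟨⟨hj1, hjk⟩, hmod⟩ := hj
    have hdvd : (m : ℤ) ∣ (j : ℤ) - τ := Int.dvd_of_emod_eq_zero hmod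
    have hjτ : τ ≤ j := tau_le_of_mod m τ j hm hτ2 hj1 hdvd
    have hdvd' : m ∣ j - τ := by
      have : (m : ℤ) ∣ ((j - τ : ℕ) : ℤ) := by rwa [Nat.cast_sub hjτ]
      exact_mod_cast this
    obtain ⟨c, hc⟩ := hdvd'
    have hcd : (j - τ) / m = c := by rw [hc]; exact Nat.mul_div_cancel_left c hm
    show τ + (j - τ) / m * m = j
    rw [hcd, Nat.mul_comm c m]; omega
  · intro t ht
    show (τ + t * m - τ) / m = t
    rw [Nat.add_sub_cancel_left]
    exact Nat.mul_div_cancel t hm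
  · intro j hj
    simp only [Finset.mem_filter, Finset.mem_Icc] at hj
    obtain ⟨⟨hj1, hjk⟩, hmod⟩ := hj
    have hdvd : (m : ℤ) ∣ (j : ℤ) - τ := Int.dvd_of_emod_eq_zero hmod
    have hjτ : τ ≤ j := tau_le_of_mod m τ j hm hτ2 hj1 hdvd
    have hdvd' : m ∣ j - τ := by
      have : (m : ℤ) ∣ ((j - τ : ℕ) : ℤ) := by rwa [Nat.cast_sub hjτ]
      exact_mod_cast this
    obtain ⟨c, hc⟩ := hdvd'
    have hcd : (j - τ) / m = c := by rw [hc]; exact Nat.mul_div_cancel_left c hm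
    have harg : τ + (j - τ) / m * m = j := by rw [hcd, Nat.mul_comm c m]; omega
    show g j = g (τ + (j - τ) / m * m)
    rw [harg]

/-- For any valid assignment (given by reorder times `τ i ∈ {1,...,kc i}`),
`k·V k + z = C`, where `z = ∑_{j=1}^k (k-j+1)·Q j` and
`C = ∑_i (1/2)(1 + 1/kc i)·k·s i + ((1+k)k/2)·D`. -/
theorem stmt_1 (n k : ℕ) (kc : ℕ → ℕ) (s : ℕ → ℝ) (τ : ℕ → ℕ)
    (x : ℕ → ℕ → ℝ) (V : ℕ → ℝ) (D z C : ℝ)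
    (hk : 0 < k)
    (hs : ∀ i < n, 0 ≤ s i)
    (hkc : ∀ i < n, 0 < kc i ∧ kc i ∣ k)
    (hτ : ∀ i < n, 1 ≤ τ i ∧ τ i ≤ kc i)
    (hx : ∀ i j, x i j = if ((j : ℤ) - (τ i : ℤ)) % (kc i : ℤ) = 0 then 1 else 0)
    (hV : ∀ ℓ, V ℓ = ∑ i ∈ Finset.range n,
      s i * ((kc i : ℝ) - ((((ℓ : ℤ) - (τ i : ℤ)) % (kc i : ℤ) : ℤ) : ℝ)) / (kc i : ℝ))
    (hD : D = ∑ i ∈ Finset.range n, s i / (kc i : ℝ))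
    (hz : z = ∑ j ∈ Finset.Icc 1 k, ((k : ℝ) - (j : ℝ) + 1) *
      ∑ i ∈ Finset.range n, s i * x i j)
    (hC : C = ∑ i ∈ Finset.range n, (1/2) * (1 + 1/(kc i : ℝ)) * (k : ℝ) * s i
      + ((1 + (k : ℝ)) * (k : ℝ) / 2) * D) :
    (k : ℝ) * V k + z = C := by
  rw [hV, hz, hC, hD]
  simp_rw [Finset.mul_sum]
  rw [Finset.sum_comm (s := Finset.Icc 1 k)]
  rw [← Finset.sum_add_distrib, ← Finset.sum_add_distrib]
  refine Finset.sum_congr rfl ?_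
  intro i hi
  rw [Finset.mem_range] at hi
  obtain ⟨hm, hdvd⟩ := hkc i hi
  obtain ⟨hτ1, hτ2⟩ := hτ i hi
  set m := kc i with hmdef
  set q := k / m with hqdef
  have hkq : k = m * q := (Nat.mul_div_cancel' hdvd).symm
  have hq1 : 1 ≤ q := (Nat.one_le_div_iff hm).mpr (Nat.le_of_dvd hk hdvd)
  -- compute the mod term
  have hmod : ((k : ℤ) - τ i) % m = (m : ℤ) - τ i := by
    have h1 : ((k : ℤ) - τ i) ≡ ((m : ℤ) - τ i) [ZMOD m] :=
      Int.ModEq.sub_right _ (Int.modEq_iff_dvd.mpr ⟨1 - q, by rw [hkq]; push_cast; ring⟩)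
    rw [Int.ModEq] at h1
    rw [h1]
    exact Int.emod_eq_of_lt (by omega) (by omega)
  -- rewrite the indicator sum
  have hxsum : ∑ j ∈ Finset.Icc 1 k, ((k : ℝ) - j + 1) * (s i * x i j)
      = ∑ t ∈ Finset.range q, ((k : ℝ) - ((τ i + t * m : ℕ) : ℝ) + 1) * s i := by
    have h2 : ∀ j ∈ Finset.Icc 1 k, ((k : ℝ) - j + 1) * (s i * x i j)
        = (if ((j : ℤ) - (τ i : ℤ)) % (m : ℤ) = 0
            then (fun j => ((k : ℝ) - (j : ℝ) + 1) * s i) j else 0) := by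
      intro j _
      rw [hx i j]
      by_cases h : ((j : ℤ) - (τ i : ℤ)) % (m : ℤ) = 0 <;> simp only [← hmdef, h, ↓reduceIte, mul_one, mul_zero]
    rw [Finset.sum_congr rfl h2,
      sum_indicator_eq k m (τ i) q hm hkq hτ1 hτ2 (fun j => ((k : ℝ) - j + 1) * s i)]
  rw [hxsum]
  -- Gauss sum
  have hgauss : ∑ t ∈ Finset.range q, (t : ℝ) = (q : ℝ) * ((q : ℝ) - 1) / 2 := by
    induction q with
    | zero => simp
    | succ p ih => rw [Finset.sum_range_succ, ih]; push_cast; ring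
  have hsum : ∑ t ∈ Finset.range q, ((k : ℝ) - ((τ i + t * m : ℕ) : ℝ) + 1) * s i
      = (q : ℝ) * (((k : ℝ) - (τ i : ℝ) + 1) * s i)
        - (m : ℝ) * s i * ((q : ℝ) * ((q : ℝ) - 1) / 2) := by
    have h3 : ∀ t ∈ Finset.range q, ((k : ℝ) - ((τ i + t * m : ℕ) : ℝ) + 1) * s i
        = ((k : ℝ) - (τ i : ℝ) + 1) * s i - ((m : ℝ) * s i) * (t : ℝ) := by
      intro t _
      push_cast
      ring
    rw [Finset.sum_congr rfl h3, Finset.sum_sub_distrib, Finset.sum_const,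
      ← Finset.mul_sum, hgauss, Finset.card_range, nsmul_eq_mul]
  rw [hsum, hmod]
  have hkreal : (k : ℝ) = (m : ℝ) * (q : ℝ) := by exact_mod_cast hkq
  have hm0 : (m : ℝ) ≠ 0 := by positivity
  rw [hkreal]
  push_cast
  field_simp
  ring
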